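/- arXiv:2403.17139 — 2 statements merged into one kernel-verified Lean document; each statement's English description precedes it below -/
import Mathlib

section
/- Let K ≥ 2 be even, let m ≥ 1 be an integer, and set N = mK. Then a pure strategy s of the constant-sum Colonel Blotto game B_1(N,K) is used with positive probability in some Nash equilibrium if and only if s_k ≤ 2N/K for every battlefield k. -/
open Finset

/-- The set of pure strategies: allocations of `N` units of the resource
over `K` battlefields. -/
def pureStrats (K N : ℕ) : Finset (Fin K → ℕ) := Finset.Nat.antidiagonalTuple K N

/-- Payoff in the Colonel Blotto game `B_α(N,K)` of playing `s` against `t`: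
`π(s,t) = Σ_k [1_{s_k > t_k} + (α/2)·1_{s_k = t_k}]`. -/
noncomputable def payoff (α : ℝ) {K : ℕ} (s t : Fin K → ℕ) : ℝ :=
  ∑ k, ((if t k < s k then (1 : ℝ) else 0) + α / 2 * (if s k = t k then 1 else 0))

/-- `σ` is a mixed strategy: a probability distribution on the pure strategies. -/
def IsMixed (K N : ℕ) (σ : (Fin K → ℕ) → ℝ) : Prop :=
  (∀ s, 0 ≤ σ s) ∧ (∀ s, s ∉ pureStrats K N → σ s = 0) ∧
    ∑ s ∈ pureStrats K N, σ s = 1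

/-- Expected payoff of the mixed strategy `σ` against the mixed strategy `τ`. -/
noncomputable def expPayoff (α : ℝ) (K N : ℕ) (σ τ : (Fin K → ℕ) → ℝ) : ℝ :=
  ∑ s ∈ pureStrats K N, ∑ t ∈ pureStrats K N, σ s * τ t * payoff α s t

/-- `(σA, σB)` is a mixed-strategy Nash equilibrium: both are mixed strategies and
neither player can strictly improve by a unilateral deviation. -/
def IsNashEq (α : ℝ) (K N : ℕ) (σA σB : (Fin K → ℕ) → ℝ) : Prop :=
  IsMixed K N σA ∧ IsMixed K N σB ∧
    (∀ σ', IsMixed K N σ' → expPayoff α K N σ' σB ≤ expPayoff α K N σA σB) ∧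
    (∀ τ', IsMixed K N τ' → expPayoff α K N τ' σA ≤ expPayoff α K N σB σA)

/-- The marginal distribution of `σ` at battlefield `k`, evaluated at `x`. -/
noncomputable def marginal (K N : ℕ) (σ : (Fin K → ℕ) → ℝ) (k : Fin K) (x : ℕ) : ℝ :=
  ∑ s ∈ (pureStrats K N).filter (fun s => s k = x), σ s

/-- `σ` induces uniform marginals on `{0,1,…,2m}` at every battlefield. -/
def UniformMarginals (K N m : ℕ) (σ : (Fin K → ℕ) → ℝ) : Prop :=
  ∀ k x, marginal K N σ k x = if x ≤ 2 * m then (1 : ℝ) / (2 * m + 1) else 0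


/-- mod-cancellation -/
lemma modCancel {M a x y : ℕ} (hM : 0 < M) (hx : x < M) (hy : y < M)
    (h : (a + x) % M = (a + y) % M) : x = y := by
  have h1 : x ≡ y [MOD M] := Nat.ModEq.add_left_cancel' a h
  have := h1.eq_of_lt_of_lt hx hy
  exact this

/-- counting lemma: an injective self-map of range M hits each value once -/
lemma countOne {M : ℕ} {f : ℕ → ℕ} (hinj : Set.InjOn f (range M))
    (hlt : ∀ j ∈ range M, f j < M) (x : ℕ) :
    ((range M).filter (fun j => f j = x)).card = if x < M then 1 else 0 := by
  have himg : (range M).image f = range M := by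
    apply eq_of_subset_of_card_le
    · intro y hy
      simp only [mem_image] at hy
      obtain ⟨j, hj, rfl⟩ := hy
      exact mem_range.2 (hlt j hj)
    · rw [Finset.card_image_of_injOn hinj, card_range]
  split_ifs with hx
  · have hx' : x ∈ (range M).image f := by rw [himg]; exact mem_range.2 hx
    simp only [mem_image] at hx'
    obtain ⟨j₀, hj₀, hfj₀⟩ := hx'
    have : (range M).filter (fun j => f j = x) = {j₀} := by
      ext j
      simp only [mem_filter, mem_singleton]
      constructor
      · rintro ⟨hj, hfj⟩
        exact hinj (by simpa using hj) (by simpa using hj₀) (hfj.trans hfj₀.symm)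
      · rintro rfl; exact ⟨hj₀, hfj₀⟩
    rw [this, card_singleton]
  · have : (range M).filter (fun j => f j = x) = ∅ := by
      ext j; simp only [mem_filter, notMem_empty, iff_false]
      rintro ⟨hj, rfl⟩
      exact hx (hlt j hj)
    rw [this, card_empty]

/-- filter card via injective image membership -/
lemma countImage {s : Finset ℕ} {f : ℕ → ℕ} (hinj : Set.InjOn f s) (r : ℕ) :
    (s.filter (fun p => f p = r)).card = if r ∈ s.image f then 1 else 0 := by
  split_ifs with hr
  · simp only [mem_image] at hr
    obtain ⟨p₀, hp₀, hfp₀⟩ := hr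
    have : s.filter (fun p => f p = r) = {p₀} := by
      ext p
      simp only [mem_filter, mem_singleton]
      constructor
      · rintro ⟨hp, hfp⟩
        exact hinj hp hp₀ (hfp.trans hfp₀.symm)
      · rintro rfl; exact ⟨hp₀, hfp₀⟩
    rw [this, card_singleton]
  · have : s.filter (fun p => f p = r) = ∅ := by
      ext p; simp only [mem_filter, notMem_empty, iff_false]
      rintro ⟨hp, rfl⟩
      exact hr (mem_image_of_mem f hp)
    rw [this, card_empty]

/-- block partition lemma -/
lemma blockPartition (g : ℕ → ℕ) (Q : ℕ → Prop) [DecidablePred Q] (L : ℕ) :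
    ∑ i ∈ range L,
      ((Ico (∑ i' ∈ range i, g i') ((∑ i' ∈ range i, g i') + g i)).filter Q).card
      = ((range (∑ i' ∈ range L, g i')).filter Q).card := by
  induction L with
  | zero => simp
  | succ n ih =>
      rw [sum_range_succ, sum_range_succ g n]
      have hsplit : range (∑ i' ∈ range n, g i' + g n)
          = range (∑ i' ∈ range n, g i') ∪
            Ico (∑ i' ∈ range n, g i') ((∑ i' ∈ range n, g i') + g n) := by
        simp only [range_eq_Ico]
        exact (Finset.Ico_union_Ico_eq_Ico (Nat.zero_le _) (Nat.le_add_right _ _)).symm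
      rw [hsplit, filter_union, card_union_of_disjoint, ih]
      exact disjoint_filter_filter
        (by rw [range_eq_Ico]; exact Finset.Ico_disjoint_Ico_consecutive _ _ _)

/-- mod map injective on short interval -/
lemma rmapInj {c P : ℕ} {w : ℕ} (hw : 0 < w) (hc : c ≤ w) :
    Set.InjOn (fun p => p % w + 1) (Ico P (P + c) : Finset ℕ) := by
  intro p hp q hq hpq
  simp only [coe_Ico, Set.mem_Ico] at hp hq
  simp only [add_left_inj] at hpq
  rcases Nat.lt_trichotomy p q with h | h | h
  · exfalso
    have h1 := Nat.div_add_mod p w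
    have h2 := Nat.div_add_mod q w
    have hdiv : p / w < q / w := by
      rcases Nat.lt_or_ge (p / w) (q / w) with h' | h'
      · exact h'
      · exfalso
        have : w * (q / w) ≤ w * (p / w) := Nat.mul_le_mul_left w h'
        omega
    have h3 : w * (p / w + 1) ≤ w * (q / w) := Nat.mul_le_mul_left w hdiv
    have h4 : w * (p/w + 1) = w * (p/w) + w := by ring
    omega
  · exact h
  · exfalso
    have h1 := Nat.div_add_mod p w
    have h2 := Nat.div_add_mod q w
    have hdiv : q / w < p / w := by
      rcases Nat.lt_or_ge (q / w) (p / w) with h' | h'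
      · exact h'
      · exfalso
        have : w * (p / w) ≤ w * (q / w) := Nat.mul_le_mul_left w h'
        omega
    have h3 : w * (q / w + 1) ≤ w * (p / w) := Nat.mul_le_mul_left w hdiv
    have h4 : w * (q/w + 1) = w * (q/w) + w := by ring
    omega

/-- wrap interval for a pair with first-row values a, b -/
def Iset (m a b : ℕ) : Finset ℕ :=
  Finset.Ico (min (2*m+1-a) (b+1)) (max (2*m+1-a) (b+1))

lemma Iset_card {m a b : ℕ} (ha : a ≤ 2*m) (hb : b ≤ 2*m) :
    (Iset m a b).card = (a + b - 2*m) + (2*m - (a+b)) := by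
  rw [Iset, Nat.card_Ico]
  omega

lemma Iset_subset {m a b : ℕ} (ha : a ≤ 2*m) (hb : b ≤ 2*m) :
    Iset m a b ⊆ Finset.Icc 1 (2*m) := by
  intro x hx
  rw [Iset, mem_Ico] at hx
  rw [mem_Icc]
  omega

/-- key wrap computation -/
lemma pairSum_eq {m a b e : ℕ} (ha : a ≤ 2*m) (hb : b ≤ 2*m) (he : e < 2*m+1) :
    (((a + e) % (2*m+1) : ℕ) : ℤ) + (((b + ((2*m+1) - e)) % (2*m+1) : ℕ) : ℤ)
      = (a : ℤ) + b + (if e ∈ Iset m a b then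
          (if a + b ≤ 2*m then ((2*m+1 : ℕ) : ℤ) else -((2*m+1 : ℕ) : ℤ)) else 0) := by
  set M := 2*m+1 with hM
  have hMpos : 0 < M := by omega
  have h1 : (a + e) % M = if a + e < M then a + e else a + e - M := by
    split_ifs with h
    · exact Nat.mod_eq_of_lt h
    · rw [Nat.mod_eq_sub_mod (by omega), Nat.mod_eq_of_lt (by omega)]
  have h2 : (b + (M - e)) % M = if b + (M - e) < M then b + (M - e) else b + (M - e) - M := by
    split_ifs with h
    · exact Nat.mod_eq_of_lt h
    · rw [Nat.mod_eq_sub_mod (by omega), Nat.mod_eq_of_lt (by omega)]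
  have hmem : e ∈ Iset m a b ↔ (min (M-a) (b+1) ≤ e ∧ e < max (M-a) (b+1)) := by
    rw [Iset, mem_Ico]
  rw [h1, h2]
  simp only [hmem]
  split_ifs <;> push_cast <;> omega

section
variable (m : ℕ) (W I : Finset ℕ)

noncomputable def permF (hcard : W.card = I.card)
    (hcard2 : (Finset.Icc 1 (2*m) \ W).card = (Finset.Icc 1 (2*m) \ I).card) : ℕ → ℕ :=
  fun j => if h : j ∈ W then (Finset.equivOfCardEq hcard ⟨j, h⟩ : ℕ)
    else if h2 : j ∈ Finset.Icc 1 (2*m) \ W then (Finset.equivOfCardEq hcard2 ⟨j, h2⟩ : ℕ)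
    else j
end

lemma permExists (m : ℕ) (W I : Finset ℕ) (hW : W ⊆ Finset.Icc 1 (2*m))
    (hI : I ⊆ Finset.Icc 1 (2*m)) (hcard : W.card = I.card) :
    ∃ f : ℕ → ℕ, f 0 = 0 ∧ Set.InjOn f (range (2*m+1)) ∧
      (∀ j, j < 2*m+1 → f j < 2*m+1) ∧
      (∀ j, 1 ≤ j → j ≤ 2*m → (f j ∈ I ↔ j ∈ W)) := by
  have hcard2 : (Finset.Icc 1 (2*m) \ W).card = (Finset.Icc 1 (2*m) \ I).card := by
    rw [card_sdiff_of_subset hW, card_sdiff_of_subset hI, hcard]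
  set e1 := Finset.equivOfCardEq hcard with he1
  set e2 := Finset.equivOfCardEq hcard2 with he2
  set f := permF m W I hcard hcard2 with hfdef
  -- branch values
  have fW : ∀ {x} (h : x ∈ W), f x = (e1 ⟨x, h⟩ : ℕ) := by
    intro x h; rw [hfdef, permF, dif_pos h]
  have fC : ∀ {x} (h2 : x ∈ Finset.Icc 1 (2*m) \ W), f x = (e2 ⟨x, h2⟩ : ℕ) := by
    intro x h2
    rw [hfdef, permF, dif_neg (mem_sdiff.1 h2).2, dif_pos h2]
  have fE : ∀ {x}, x ∉ Finset.Icc 1 (2*m) → f x = x := by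
    intro x hx
    have h1 : x ∉ W := fun h => hx (hW h)
    have h2 : x ∉ Finset.Icc 1 (2*m) \ W := fun h => hx (mem_sdiff.1 h).1
    rw [hfdef, permF, dif_neg h1, dif_neg h2]
  have key : ∀ x, x < 2*m+1 →
      (x ∈ W ∧ f x ∈ I) ∨
      (x ∉ W ∧ x ∈ Finset.Icc 1 (2*m) ∧ f x ∈ Finset.Icc 1 (2*m) \ I) ∨
      (x = 0 ∧ f x = 0) := by
    intro x hx
    by_cases h : x ∈ W
    · exact Or.inl ⟨h, by rw [fW h]; exact (e1 ⟨x, h⟩).2⟩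
    · by_cases h2 : x ∈ Finset.Icc 1 (2*m) \ W
      · exact Or.inr (Or.inl ⟨h, (mem_sdiff.1 h2).1, by rw [fC h2]; exact (e2 ⟨x, h2⟩).2⟩)
      · have hicc : x ∉ Finset.Icc 1 (2*m) := fun hx' => h2 (mem_sdiff.2 ⟨hx', h⟩)
        have hx0 : x = 0 := by rw [mem_Icc] at hicc; omega
        exact Or.inr (Or.inr ⟨hx0, by rw [fE hicc, hx0]⟩)
  refine ⟨f, ?_, ?_, ?_, ?_⟩
  · exact fE (by simp)
  · intro j hj j' hj' hf
    simp only [coe_range, Set.mem_Iio] at hj hj'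
    rcases key j hj with ⟨hw, hv⟩ | ⟨hw, hicc, hv⟩ | ⟨hz, hv⟩ <;>
      rcases key j' hj' with ⟨hw', hv'⟩ | ⟨hw', hicc', hv'⟩ | ⟨hz', hv'⟩
    · rw [fW hw, fW hw'] at hf
      exact congrArg Subtype.val (e1.injective (Subtype.ext hf))
    · exfalso; rw [← hf] at hv'; exact (mem_sdiff.1 hv').2 hv
    · exfalso; rw [hf, hv'] at hv; exact by simpa using hI hv
    · exfalso; rw [hf] at hv; exact (mem_sdiff.1 hv).2 hv'
    · have hj2 : j ∈ Finset.Icc 1 (2*m) \ W := mem_sdiff.2 ⟨hicc, hw⟩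
      have hj2' : j' ∈ Finset.Icc 1 (2*m) \ W := mem_sdiff.2 ⟨hicc', hw'⟩
      rw [fC hj2, fC hj2'] at hf
      exact congrArg Subtype.val (e2.injective (Subtype.ext hf))
    · exfalso; rw [hf, hv'] at hv; exact by simpa using (mem_sdiff.1 hv).1
    · exfalso; rw [← hf, hv] at hv'; exact by simpa using hI hv'
    · exfalso; rw [← hf, hv] at hv'; exact by simpa using (mem_sdiff.1 hv').1
    · rw [hz, hz']
  · intro j hj
    rcases key j hj with ⟨_, hv⟩ | ⟨_, _, hv⟩ | ⟨_, hv⟩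
    · have := hI hv; rw [mem_Icc] at this; omega
    · have := (mem_sdiff.1 hv).1; rw [mem_Icc] at this; omega
    · omega
  · intro j h1j hj2m
    by_cases h : j ∈ W
    · rw [fW h]; simp only [h, iff_true]; exact (e1 ⟨j, h⟩).2
    · have h2 : j ∈ Finset.Icc 1 (2*m) \ W := mem_sdiff.2 ⟨mem_Icc.2 ⟨h1j, hj2m⟩, h⟩
      rw [fC h2]; simp only [h, iff_false]
      exact (mem_sdiff.1 (e2 ⟨j, h2⟩).2).2

lemma constructionD (m L : ℕ) (hm : 1 ≤ m) (A B : ℕ → ℕ)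
    (hA : ∀ i, i < L → A i ≤ 2*m) (hB : ∀ i, i < L → B i ≤ 2*m)
    (hsum : ∑ i ∈ range L, (A i + B i) = 2*m*L) :
    ∃ d : ℕ → ℕ → ℕ,
      (∀ i, i < L → d i 0 = 0) ∧
      (∀ i, i < L → Set.InjOn (d i) (range (2*m+1))) ∧
      (∀ i j, i < L → j < 2*m+1 → d i j < 2*m+1) ∧
      (∀ j, j < 2*m+1 →
        ∑ i ∈ range L, (((A i + d i j) % (2*m+1)) + ((B i + ((2*m+1) - d i j)) % (2*m+1)))
          = 2*m*L) := by
  classical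
  set M := 2*m+1 with hM
  set cp : ℕ → ℕ := fun i => A i + B i - 2*m with hcp
  set cn : ℕ → ℕ := fun i => 2*m - (A i + B i) with hcn
  set Pp : ℕ → ℕ := fun i => ∑ i' ∈ range i, cp i' with hPp
  set Pn : ℕ → ℕ := fun i => ∑ i' ∈ range i, cn i' with hPn
  set rmap : ℕ → ℕ := fun p => p % (2*m) + 1 with hrmap
  set Wp : ℕ → Finset ℕ := fun i => (Ico (Pp i) (Pp i + cp i)).image rmap with hWp
  set Wn : ℕ → Finset ℕ := fun i => (Ico (Pn i) (Pn i + cn i)).image rmap with hWn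
  have h2m : 0 < 2*m := by omega
  have hcple : ∀ i, i < L → cp i ≤ 2*m := by intro i hi; have := hA i hi; have := hB i hi; simp only [hcp]; omega
  have hcnle : ∀ i, i < L → cn i ≤ 2*m := by intro i _; simp only [hcn]; omega
  have hinjp : ∀ i, i < L → Set.InjOn rmap (Ico (Pp i) (Pp i + cp i) : Finset ℕ) :=
    fun i hi => rmapInj h2m (hcple i hi)
  have hinjn : ∀ i, i < L → Set.InjOn rmap (Ico (Pn i) (Pn i + cn i) : Finset ℕ) :=
    fun i hi => rmapInj h2m (hcnle i hi)
  have hWpcard : ∀ i, i < L → (Wp i).card = cp i := by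
    intro i hi
    rw [hWp]
    rw [Finset.card_image_of_injOn (hinjp i hi), Nat.card_Ico]
    omega
  have hWncard : ∀ i, i < L → (Wn i).card = cn i := by
    intro i hi
    rw [hWn]
    rw [Finset.card_image_of_injOn (hinjn i hi), Nat.card_Ico]
    omega
  have hrmapmem : ∀ p, rmap p ∈ Finset.Icc 1 (2*m) := by
    intro p
    have : p % (2*m) < 2*m := Nat.mod_lt _ h2m
    rw [mem_Icc]; simp only [hrmap]; omega
  have hWpsub : ∀ i, Wp i ⊆ Finset.Icc 1 (2*m) := by
    intro i x hx
    rw [hWp] at hx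
    simp only [mem_image] at hx
    obtain ⟨p, _, rfl⟩ := hx
    exact hrmapmem p
  have hWnsub : ∀ i, Wn i ⊆ Finset.Icc 1 (2*m) := by
    intro i x hx
    rw [hWn] at hx
    simp only [mem_image] at hx
    obtain ⟨p, _, rfl⟩ := hx
    exact hrmapmem p
  -- one of the two is empty
  have hcpn : ∀ i, cp i = 0 ∨ cn i = 0 := by intro i; simp only [hcp, hcn]; omega
  have hWcard : ∀ i, i < L → (Wp i ∪ Wn i).card = cp i + cn i := by
    intro i hi
    rcases hcpn i with h | h
    · have : Wp i = ∅ := by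
        rw [← Finset.card_eq_zero]; rw [hWpcard i hi]; exact h
      rw [this, empty_union, hWncard i hi, h, zero_add]
    · have : Wn i = ∅ := by
        rw [← Finset.card_eq_zero]; rw [hWncard i hi]; exact h
      rw [this, union_empty, hWpcard i hi, h, add_zero]
  -- the permutations
  have hex : ∀ i, i < L → ∃ f : ℕ → ℕ, f 0 = 0 ∧ Set.InjOn f (range (2*m+1)) ∧
      (∀ j, j < 2*m+1 → f j < 2*m+1) ∧
      (∀ j, 1 ≤ j → j ≤ 2*m → (f j ∈ Iset m (A i) (B i) ↔ j ∈ Wp i ∪ Wn i)) := by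
    intro i hi
    apply permExists m (Wp i ∪ Wn i) (Iset m (A i) (B i))
    · exact union_subset (hWpsub i) (hWnsub i)
    · exact Iset_subset (hA i hi) (hB i hi)
    · rw [hWcard i hi, Iset_card (hA i hi) (hB i hi)]
  choose! f hf0 hfinj hflt hfmem using hex
  refine ⟨f, hf0, hfinj, (fun i j hi hj => hflt i hi j hj), ?_⟩
  -- row sums
  intro j hj
  -- cast to ℤ
  have hcast : ∀ i ∈ range L,
      ((((A i + f i j) % M) + ((B i + (M - f i j)) % M) : ℕ) : ℤ)
      = (A i : ℤ) + B i + (if f i j ∈ Iset m (A i) (B i) then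
          (if A i + B i ≤ 2*m then ((M:ℕ) : ℤ) else -((M:ℕ) : ℤ)) else 0) := by
    intro i hi
    rw [mem_range] at hi
    push_cast [Nat.cast_add]
    exact_mod_cast pairSum_eq (hA i hi) (hB i hi) (hflt i hi j hj)
  have hfirst : ∑ i ∈ range L, ((A i : ℤ) + B i) = ((2*m*L : ℕ) : ℤ) := by
    exact_mod_cast congrArg (Nat.cast : ℕ → ℤ) hsum
  have hwrap : ∑ i ∈ range L, (if f i j ∈ Iset m (A i) (B i) then
      (if A i + B i ≤ 2*m then ((M:ℕ) : ℤ) else -((M:ℕ) : ℤ)) else 0) = 0 := by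
    rcases Nat.eq_zero_or_pos j with hj0 | hjpos
    · apply Finset.sum_eq_zero
      intro i hi
      rw [mem_range] at hi
      have h0 : f i j ∉ Iset m (A i) (B i) := by
        rw [hj0, hf0 i hi]
        intro hmem
        have := Iset_subset (hA i hi) (hB i hi) hmem
        simp at this
      rw [if_neg h0]
    · -- j ∈ [1, 2m]
      have hj2m : j ≤ 2*m := by omega
      have hterm : ∀ i ∈ range L, (if f i j ∈ Iset m (A i) (B i) then
          (if A i + B i ≤ 2*m then ((M:ℕ) : ℤ) else -((M:ℕ) : ℤ)) else 0)
          = ((M:ℕ) : ℤ) * ((Ico (Pn i) (Pn i + cn i)).filter (fun p => rmap p = j)).card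
            - ((M:ℕ) : ℤ) * ((Ico (Pp i) (Pp i + cp i)).filter (fun p => rmap p = j)).card := by
        intro i hi
        rw [mem_range] at hi
        have hmemiff := hfmem i hi j hjpos hj2m
        have hcntp : (((Ico (Pp i) (Pp i + cp i)).filter (fun p => rmap p = j)).card : ℤ)
            = if j ∈ Wp i then 1 else 0 := by
          rw [countImage (hinjp i hi) j]
          split_ifs with h
          · rfl
          · rfl
        have hcntn : (((Ico (Pn i) (Pn i + cn i)).filter (fun p => rmap p = j)).card : ℤ)
            = if j ∈ Wn i then 1 else 0 := by
          rw [countImage (hinjn i hi) j]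
          split_ifs with h
          · rfl
          · rfl
        rw [hcntp, hcntn]
        simp only [hmemiff]
        rcases hcpn i with h | h
        · -- cp = 0 : Wp empty, pair is "negative or zero", A+B ≤ 2m
          have hWpe : Wp i = ∅ := by
            rw [← Finset.card_eq_zero, hWpcard i hi]; exact h
          have hle : A i + B i ≤ 2*m := by simp only [hcp] at h; omega
          rw [hWpe]
          simp only [notMem_empty, if_false, if_pos hle, mem_union, false_or]
          split_ifs <;> ring
        · -- cn = 0 : Wn empty
          have hWne : Wn i = ∅ := by
            rw [← Finset.card_eq_zero, hWncard i hi]; exact h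
          by_cases hle : A i + B i ≤ 2*m
          · -- then cp = 0 too, both empty
            have hWpe : Wp i = ∅ := by
              rw [← Finset.card_eq_zero, hWpcard i hi]; simp only [hcp]; omega
            rw [hWpe, hWne]
            simp
          · rw [hWne]
            simp only [notMem_empty, if_false, if_neg hle, mem_union, or_false]
            split_ifs <;> ring
      rw [Finset.sum_congr rfl hterm, Finset.sum_sub_distrib, ← Finset.mul_sum, ← Finset.mul_sum]
      -- block partitions
      have hEpn : ∑ i' ∈ range L, cp i' = ∑ i' ∈ range L, cn i' := by
        have : ∀ i ∈ range L, ((cp i : ℤ) - (cn i : ℤ)) = (A i : ℤ) + B i - 2*m := by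
          intro i _
          simp only [hcp, hcn]
          omega
        have h1 : ∑ i ∈ range L, ((cp i : ℤ) - (cn i : ℤ))
            = ∑ i ∈ range L, ((A i : ℤ) + B i - 2*m) := Finset.sum_congr rfl this
        rw [Finset.sum_sub_distrib] at h1
        have h2 : ∑ i ∈ range L, ((A i : ℤ) + B i - 2*m) = 0 := by
          rw [Finset.sum_sub_distrib]
          have : ∑ i ∈ range L, ((A i : ℤ) + B i) = 2*m*L := by
            exact_mod_cast congrArg (Nat.cast : ℕ → ℤ) hsum
          rw [this]
          simp [Finset.sum_const, card_range]
          ring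
        have : (∑ i ∈ range L, (cp i : ℤ)) = ∑ i ∈ range L, (cn i : ℤ) := by omega
        exact_mod_cast this
      have hbp := blockPartition cp (fun p => rmap p = j) L
      have hbn := blockPartition cn (fun p => rmap p = j) L
      have : (∑ i ∈ range L, (((Ico (Pn i) (Pn i + cn i)).filter (fun p => rmap p = j)).card : ℤ))
          = ∑ i ∈ range L, (((Ico (Pp i) (Pp i + cp i)).filter (fun p => rmap p = j)).card : ℤ) := by
        have e1 : ∑ i ∈ range L, (((Ico (Pn i) (Pn i + cn i)).filter (fun p => rmap p = j)).card : ℤ)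
            = (((range (∑ i' ∈ range L, cn i')).filter (fun p => rmap p = j)).card : ℤ) := by
          exact_mod_cast congrArg (Nat.cast : ℕ → ℤ) hbn
        have e2 : ∑ i ∈ range L, (((Ico (Pp i) (Pp i + cp i)).filter (fun p => rmap p = j)).card : ℤ)
            = (((range (∑ i' ∈ range L, cp i')).filter (fun p => rmap p = j)).card : ℤ) := by
          exact_mod_cast congrArg (Nat.cast : ℕ → ℤ) hbp
        rw [e1, e2, hEpn]
      rw [this]
      ring
  have hsumZ : ((∑ i ∈ range L, (((A i + f i j) % M) + ((B i + (M - f i j)) % M)) : ℕ) : ℤ)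
      = ((2*m*L : ℕ) : ℤ) := by
    rw [Nat.cast_sum, Finset.sum_congr rfl hcast, Finset.sum_add_distrib, hwrap, add_zero]
    exact hfirst
  exact_mod_cast hsumZ
lemma subM_mod {M v : ℕ} (hv : v < M) : (M - v) % M = if v = 0 then 0 else M - v := by
  split_ifs with h
  · subst h; simp
  · exact Nat.mod_eq_of_lt (by omega)

lemma nuExists (m L : ℕ) (hm : 1 ≤ m) (s : Fin (L+L) → ℕ)
    (hbox : ∀ k, s k ≤ 2*m) (hssum : ∑ k, s k = m * (L+L)) :
    ∃ ν : (Fin (L+L) → ℕ) → ℝ, IsMixed (L+L) (m*(L+L)) ν ∧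
      UniformMarginals (L+L) (m*(L+L)) m ν ∧ 0 < ν s := by
  classical
  set M := 2*m+1 with hM
  have hMpos : 0 < M := by omega
  set A : ℕ → ℕ := fun i => if h : i < L then s (Fin.castAdd L ⟨i, h⟩) else 0 with hA
  set B : ℕ → ℕ := fun i => if h : i < L then s (Fin.natAdd L ⟨i, h⟩) else 0 with hB
  have hAle : ∀ i, i < L → A i ≤ 2*m := by
    intro i hi; simp only [hA, dif_pos hi]; exact hbox _
  have hBle : ∀ i, i < L → B i ≤ 2*m := by
    intro i hi; simp only [hB, dif_pos hi]; exact hbox _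
  have hsumAB : ∑ i ∈ range L, (A i + B i) = 2*m*L := by
    rw [Finset.sum_add_distrib]
    have e1 : ∑ i ∈ range L, A i = ∑ i : Fin L, s (Fin.castAdd L i) := by
      rw [← Fin.sum_univ_eq_sum_range]
      exact Finset.sum_congr rfl (fun i _ => by simp only [hA, dif_pos i.isLt])
    have e2 : ∑ i ∈ range L, B i = ∑ i : Fin L, s (Fin.natAdd L i) := by
      rw [← Fin.sum_univ_eq_sum_range]
      exact Finset.sum_congr rfl (fun i _ => by simp only [hB, dif_pos i.isLt])
    rw [e1, e2, ← Fin.sum_univ_add, hssum]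
    ring
  obtain ⟨d, hd0, hdinj, hdlt, hdsum⟩ := constructionD m L hm A B hAle hBle hsumAB
  -- the cycle of strategies
  set tt : ℕ → (Fin (L+L) → ℕ) := fun j k =>
    if h : (k:ℕ) < L then (s k + d (k:ℕ) j) % M
    else (s k + (M - d ((k:ℕ) - L) j)) % M with htt
  have htt0 : tt 0 = s := by
    funext k
    simp only [htt]
    split_ifs with h
    · rw [hd0 _ h, add_zero]
      exact Nat.mod_eq_of_lt (by have := hbox k; omega)
    · have hkL : (k:ℕ) - L < L := by have := k.isLt; omega
      rw [hd0 _ hkL, Nat.sub_zero, Nat.add_mod_right]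
      exact Nat.mod_eq_of_lt (by have := hbox k; omega)
  have httPS : ∀ j, j < M → tt j ∈ pureStrats (L+L) (m*(L+L)) := by
    intro j hj
    rw [pureStrats, Finset.Nat.mem_antidiagonalTuple]
    rw [Fin.sum_univ_add]
    have e1 : ∀ i : Fin L, tt j (Fin.castAdd L i) = (A (i:ℕ) + d (i:ℕ) j) % M := by
      intro i
      simp only [htt]
      rw [dif_pos (show ((Fin.castAdd L i : Fin (L+L)):ℕ) < L from i.isLt)]
      simp only [hA, dif_pos i.isLt]
      rfl
    have e2 : ∀ i : Fin L, tt j (Fin.natAdd L i) = (B (i:ℕ) + (M - d (i:ℕ) j)) % M := by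
      intro i
      simp only [htt]
      have hv : ((Fin.natAdd L i : Fin (L+L)):ℕ) = L + (i:ℕ) := rfl
      rw [dif_neg (by rw [hv]; omega)]
      simp only [hv]
      have : L + (i:ℕ) - L = (i:ℕ) := by omega
      rw [this]
      simp only [hB, dif_pos i.isLt]
    rw [Finset.sum_congr rfl (fun i _ => e1 i), Finset.sum_congr rfl (fun i _ => e2 i)]
    rw [Fin.sum_univ_eq_sum_range (fun i => (A i + d i j) % M),
      Fin.sum_univ_eq_sum_range (fun i => (B i + (M - d i j)) % M)]
    rw [← Finset.sum_add_distrib]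
    rw [hdsum j hj]
    ring
  -- column uniqueness
  have hcol : ∀ (k : Fin (L+L)) (x : ℕ),
      ((range M).filter (fun j => tt j k = x)).card = if x < M then 1 else 0 := by
    intro k x
    apply countOne
    · intro j hj j' hj' he
      simp only [coe_range, Set.mem_Iio] at hj hj'
      simp only [htt] at he
      by_cases h : (k:ℕ) < L
      · rw [dif_pos h, dif_pos h] at he
        have := modCancel hMpos (hdlt _ j h hj) (hdlt _ j' h hj') he
        exact hdinj _ h (by simp only [coe_range, Set.mem_Iio]; exact hj) (by simp only [coe_range, Set.mem_Iio]; exact hj') this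
      · rw [dif_neg h, dif_neg h] at he
        have hkL : (k:ℕ) - L < L := by have := k.isLt; omega
        set v := d ((k:ℕ) - L) j with hv
        set v' := d ((k:ℕ) - L) j' with hv'
        have hvlt : v < M := hdlt _ j hkL hj
        have hvlt' : v' < M := hdlt _ j' hkL hj'
        rw [Nat.add_mod (s k) (M - v) M, Nat.add_mod (s k) (M - v') M] at he
        have h1 : (M - v) % M = (M - v') % M :=
          modCancel hMpos (Nat.mod_lt _ hMpos) (Nat.mod_lt _ hMpos) he
        rw [subM_mod hvlt, subM_mod hvlt'] at h1
        have hvv : v = v' := by split_ifs at h1 <;> omega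
        exact hdinj _ hkL (by simp only [coe_range, Set.mem_Iio]; exact hj) (by simp only [coe_range, Set.mem_Iio]; exact hj') hvv
    · intro j _
      simp only [htt]
      split_ifs <;> exact Nat.mod_lt _ hMpos
  -- the mixed strategy
  set ν : (Fin (L+L) → ℕ) → ℝ :=
    fun t => (((range M).filter (fun j => tt j = t)).card : ℝ) / M with hν
  have hν0 : ∀ t, 0 ≤ ν t := by
    intro t
    apply div_nonneg (Nat.cast_nonneg _) (Nat.cast_nonneg _)
  have hνsupp : ∀ t, t ∉ pureStrats (L+L) (m*(L+L)) → ν t = 0 := by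
    intro t ht
    have : (range M).filter (fun j => tt j = t) = ∅ := by
      ext j
      simp only [mem_filter, mem_range, notMem_empty, iff_false]
      rintro ⟨hj, rfl⟩
      exact ht (httPS j hj)
    simp only [hν, this, card_empty, Nat.cast_zero, zero_div]
  have hfiber : (range M).card
      = ∑ t ∈ pureStrats (L+L) (m*(L+L)), ((range M).filter (fun j => tt j = t)).card :=
    Finset.card_eq_sum_card_fiberwise (fun j hj => httPS j (mem_range.1 hj))
  have hνsum : ∑ t ∈ pureStrats (L+L) (m*(L+L)), ν t = 1 := by
    simp only [hν]
    rw [← Finset.sum_div]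
    rw [← Nat.cast_sum, ← hfiber, card_range]
    field_simp
  have hνmarg : UniformMarginals (L+L) (m*(L+L)) m ν := by
    intro k x
    have hx : x < M ↔ x ≤ 2*m := by omega
    rw [marginal]
    set s₀ := (range M).filter (fun j => tt j k = x) with hs₀
    have hfib2 : s₀.card = ∑ t ∈ (pureStrats (L+L) (m*(L+L))).filter (fun t => t k = x),
        (s₀.filter (fun j => tt j = t)).card := by
      apply Finset.card_eq_sum_card_fiberwise
      intro j hj
      simp only [hs₀, mem_coe, mem_filter, mem_range] at hj
      exact mem_filter.2 ⟨httPS j hj.1, hj.2⟩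
    have hfib3 : ∀ t ∈ (pureStrats (L+L) (m*(L+L))).filter (fun t => t k = x),
        s₀.filter (fun j => tt j = t) = (range M).filter (fun j => tt j = t) := by
      intro t ht
      rw [mem_filter] at ht
      ext j
      simp only [hs₀, filter_filter, mem_filter, mem_range]
      constructor
      · rintro ⟨hj, _, h2⟩; exact ⟨hj, h2⟩
      · rintro ⟨hj, h2⟩; exact ⟨hj, by rw [h2]; exact ht.2, h2⟩
    have : ∑ t ∈ (pureStrats (L+L) (m*(L+L))).filter (fun t => t k = x), ν t
        = (s₀.card : ℝ) / M := by
      simp only [hν]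
      rw [← Finset.sum_div]
      congr 1
      rw [hfib2, Nat.cast_sum]
      exact Finset.sum_congr rfl (fun t ht => by rw [hfib3 t ht])
    rw [this]
    rw [hs₀]
    rw [hcol k x]
    split_ifs with h1 h2 h2
    · simp only [hM]; push_cast; ring
    · exact absurd (hx.1 h1) h2
    · exact absurd (hx.2 h2) h1
    · simp
  have hνs : 0 < ν s := by
    simp only [hν]
    apply div_pos
    · have : (0:ℕ) ∈ (range M).filter (fun j => tt j = s) := by
        simp only [mem_filter, mem_range]
        exact ⟨hMpos, htt0⟩
      have hc := Finset.card_pos.2 ⟨0, this⟩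
      exact_mod_cast hc
    · exact_mod_cast hMpos
  exact ⟨ν, ⟨hν0, hνsupp, hνsum⟩, hνmarg, hνs⟩

/-- per-battlefield constant sum -/
lemma payoff_add_payoff {K : ℕ} (s t : Fin K → ℕ) :
    payoff 1 s t + payoff 1 t s = K := by
  rw [payoff, payoff, ← Finset.sum_add_distrib]
  have key : ∀ a b : ℕ, ((if b < a then (1:ℝ) else 0) + 1/2 * (if a = b then 1 else 0))
      + ((if a < b then (1:ℝ) else 0) + 1/2 * (if b = a then 1 else 0)) = 1 := by
    intro a b
    rcases lt_trichotomy a b with h | h | h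
    · rw [if_neg (by omega), if_neg (by omega), if_pos h, if_neg (by omega)]; norm_num
    · rw [if_neg (by omega), if_pos h, if_neg (by omega), if_pos h.symm]; norm_num
    · rw [if_pos h, if_neg (by omega), if_neg (by omega), if_neg (by omega)]; norm_num
  rw [Finset.sum_congr rfl (fun k _ => key (s k) (t k))]
  simp

/-- per-battlefield value against uniform marginal -/
noncomputable def Fval (m y : ℕ) : ℝ :=
  if y ≤ 2*m then (((2*m - y : ℕ) : ℝ) + 1/2) / (2*m+1) else 0

lemma Fval_ge (m y : ℕ) : (2*(m:ℝ) - y + 1/2) / (2*m+1) ≤ Fval m y := by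
  rw [Fval]
  have hden : (0:ℝ) < 2*m+1 := by positivity
  split_ifs with h
  · apply le_of_eq
    rw [Nat.cast_sub (by omega)]
    push_cast
    ring
  · apply le_of_lt
    apply div_neg_of_neg_of_pos _ hden
    have : (2*m+1 : ℝ) ≤ y := by exact_mod_cast Nat.cast_le.2 (by omega : 2*m+1 ≤ y)
    linarith

lemma Fval_eq (m y : ℕ) (h : y ≤ 2*m) :
    Fval m y = (2*(m:ℝ) - y + 1/2) / (2*m+1) := by
  rw [Fval, if_pos h, Nat.cast_sub (by omega)]
  push_cast
  ring

lemma Fval_gt (m y : ℕ) (h : ¬ y ≤ 2*m) :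
    (2*(m:ℝ) - y + 1/2) / (2*m+1) < Fval m y := by
  rw [Fval, if_neg h]
  apply div_neg_of_neg_of_pos
  · have : (2*m+1 : ℝ) ≤ y := by exact_mod_cast (by omega : 2*m+1 ≤ y)
    linarith
  · positivity

/-- the aggregate payoff of a uniform-marginal strategy against a pure strategy -/
lemma uniform_vs_pure (K N m : ℕ) (hm : 1 ≤ m) (h2m : 2*m ≤ N)
    (σ : (Fin K → ℕ) → ℝ) (hσ : IsMixed K N σ) (hu : UniformMarginals K N m σ)
    (t : Fin K → ℕ) :
    ∑ s ∈ pureStrats K N, σ s * payoff 1 s t = ∑ k, Fval m (t k) := by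
  classical
  have expand : ∑ s ∈ pureStrats K N, σ s * payoff 1 s t
      = ∑ k, ∑ s ∈ pureStrats K N,
          σ s * ((if t k < s k then (1:ℝ) else 0) + 1/2 * (if s k = t k then 1 else 0)) := by
    rw [Finset.sum_comm]
    apply Finset.sum_congr rfl
    intro s _
    rw [payoff, Finset.mul_sum]
  rw [expand]
  apply Finset.sum_congr rfl
  intro k _
  -- fiber over the value of s k
  have hmaps : ∀ s ∈ pureStrats K N, s k ∈ range (N+1) := by
    intro s hs
    rw [pureStrats, Finset.Nat.mem_antidiagonalTuple] at hs
    rw [mem_range]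
    have : s k ≤ ∑ i, s i := Finset.single_le_sum (fun i _ => Nat.zero_le _) (mem_univ k)
    omega
  rw [← Finset.sum_fiberwise_of_maps_to hmaps]
  have inner : ∀ x ∈ range (N+1),
      ∑ s ∈ (pureStrats K N).filter (fun s => s k = x),
        σ s * ((if t k < s k then (1:ℝ) else 0) + 1/2 * (if s k = t k then 1 else 0))
      = marginal K N σ k x * ((if t k < x then (1:ℝ) else 0) + 1/2 * (if x = t k then 1 else 0)) := by
    intro x _
    rw [marginal, Finset.sum_mul]
    apply Finset.sum_congr rfl
    intro s hs
    rw [mem_filter] at hs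
    rw [hs.2]
  rw [Finset.sum_congr rfl inner]
  -- plug in uniform marginals and restrict the range
  have hval : ∀ x ∈ range (N+1),
      marginal K N σ k x * ((if t k < x then (1:ℝ) else 0) + 1/2 * (if x = t k then 1 else 0))
      = (if x ≤ 2*m then (1:ℝ)/(2*m+1) else 0)
          * ((if t k < x then (1:ℝ) else 0) + 1/2 * (if x = t k then 1 else 0)) := by
    intro x _
    rw [hu k x]
  rw [Finset.sum_congr rfl hval]
  rw [← Finset.sum_subset (Finset.range_subset_range.2 (by omega : 2*m+1 ≤ N+1))
    (fun x _ hx => by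
      rw [mem_range, not_lt] at hx
      rw [if_neg (by omega), zero_mul])]
  have insimp : ∀ x ∈ range (2*m+1),
      (if x ≤ 2*m then (1:ℝ)/(2*m+1) else 0)
          * ((if t k < x then (1:ℝ) else 0) + 1/2 * (if x = t k then 1 else 0))
      = (1:ℝ)/(2*m+1) * ((if t k < x then (1:ℝ) else 0) + 1/2 * (if x = t k then 1 else 0)) := by
    intro x hx
    rw [mem_range] at hx
    rw [if_pos (by omega)]
  rw [Finset.sum_congr rfl insimp, ← Finset.mul_sum]
  -- compute the sum over x
  have hsplit : ∑ x ∈ range (2*m+1),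
      ((if t k < x then (1:ℝ) else 0) + 1/2 * (if x = t k then 1 else 0))
      = (((2*m+1) - (t k + 1) : ℕ) : ℝ) + 1/2 * (if t k < 2*m+1 then 1 else 0) := by
    rw [Finset.sum_add_distrib]
    congr 1
    · have hfil : (range (2*m+1)).filter (fun x => t k < x) = Ico (t k + 1) (2*m+1) := by
        ext x
        simp only [mem_filter, mem_range, mem_Ico]
        omega
      rw [Finset.sum_boole, hfil, Nat.card_Ico]
    · rw [← Finset.mul_sum]
      congr 1
      rw [Finset.sum_ite_eq' (range (2*m+1)) (t k) (fun _ => (1:ℝ))]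
      simp [mem_range]
  rw [hsplit]
  -- case analysis
  by_cases hb : t k ≤ 2*m
  · rw [Fval_eq m (t k) hb, if_pos (by omega)]
    rw [Nat.cast_sub (by omega)]
    push_cast
    ring
  · rw [Fval, if_neg hb]
    have h1 : (2*m+1) - (t k + 1) = 0 := by omega
    rw [h1, if_neg (by omega)]
    norm_num

lemma gval_base (K N m : ℕ) (hN : N = m*K) (t : Fin K → ℕ)
    (ht : ∑ k, t k = N) :
    ∑ k, (2*(m:ℝ) - t k + 1/2) / (2*m+1) = K/2 := by
  rw [← Finset.sum_div]
  have h1 : ∑ k, (2*(m:ℝ) - t k + 1/2) = 2*m*K - N + K/2 := by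
    rw [Finset.sum_add_distrib, Finset.sum_sub_distrib]
    have e1 : ∑ _k : Fin K, (2*(m:ℝ)) = 2*m*K := by
      rw [Finset.sum_const, card_univ, Fintype.card_fin, nsmul_eq_mul]; ring
    have e2 : ∑ k : Fin K, ((t k : ℝ)) = N := by
      rw [← Nat.cast_sum, ht]
    have e3 : ∑ _k : Fin K, (1/2 : ℝ) = K/2 := by
      rw [Finset.sum_const, card_univ, Fintype.card_fin, nsmul_eq_mul]; ring
    rw [e1, e2, e3]
  rw [h1, hN]
  have hd : (2*(m:ℝ)+1) ≠ 0 := by positivity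
  push_cast
  field_simp
  ring

lemma gval_ge (K N m : ℕ) (hN : N = m*K) (t : Fin K → ℕ)
    (ht : ∑ k, t k = N) : (K:ℝ)/2 ≤ ∑ k, Fval m (t k) := by
  rw [← gval_base K N m hN t ht]
  exact Finset.sum_le_sum (fun k _ => Fval_ge m (t k))

lemma gval_eqhalf (K N m : ℕ) (hN : N = m*K) (t : Fin K → ℕ)
    (ht : ∑ k, t k = N) (hbox : ∀ k, t k ≤ 2*m) :
    ∑ k, Fval m (t k) = (K:ℝ)/2 := by
  rw [← gval_base K N m hN t ht]
  exact Finset.sum_congr rfl (fun k _ => Fval_eq m (t k) (hbox k))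

lemma gval_gt (K N m : ℕ) (hN : N = m*K) (t : Fin K → ℕ)
    (ht : ∑ k, t k = N) (k₀ : Fin K) (hk₀ : ¬ t k₀ ≤ 2*m) :
    (K:ℝ)/2 < ∑ k, Fval m (t k) := by
  rw [← gval_base K N m hN t ht]
  exact Finset.sum_lt_sum (fun k _ => Fval_ge m (t k)) ⟨k₀, mem_univ k₀, Fval_gt m (t k₀) hk₀⟩

lemma expPayoff_col (α : ℝ) (K N : ℕ) (σ τ : (Fin K → ℕ) → ℝ) :
    expPayoff α K N σ τ = ∑ t ∈ pureStrats K N, τ t * ∑ s ∈ pureStrats K N, σ s * payoff α s t := by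
  rw [expPayoff, Finset.sum_comm]
  apply Finset.sum_congr rfl
  intro t _
  rw [Finset.mul_sum]
  apply Finset.sum_congr rfl
  intro s _
  ring

lemma expPayoff_row (α : ℝ) (K N : ℕ) (σ τ : (Fin K → ℕ) → ℝ) :
    expPayoff α K N σ τ = ∑ s ∈ pureStrats K N, σ s * ∑ t ∈ pureStrats K N, τ t * payoff α s t := by
  rw [expPayoff]
  apply Finset.sum_congr rfl
  intro s _
  rw [Finset.mul_sum]
  apply Finset.sum_congr rfl
  intro t _
  ring

lemma pure_vs_uniform (K N m : ℕ) (hm : 1 ≤ m) (h2m : 2*m ≤ N)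
    (τ : (Fin K → ℕ) → ℝ) (hτ : IsMixed K N τ) (hu : UniformMarginals K N m τ)
    (s : Fin K → ℕ) :
    ∑ t ∈ pureStrats K N, τ t * payoff 1 s t = K - ∑ k, Fval m (s k) := by
  have step : ∀ t ∈ pureStrats K N,
      τ t * payoff 1 s t = τ t * K - τ t * payoff 1 t s := by
    intro t _
    have h := payoff_add_payoff s t
    have : payoff 1 s t = K - payoff 1 t s := by linarith
    rw [this]; ring
  rw [Finset.sum_congr rfl step, Finset.sum_sub_distrib, ← Finset.sum_mul,
    hτ.2.2, uniform_vs_pure K N m hm h2m τ hτ hu s]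
  ring

/-- deviation payoff against a uniform-marginal strategy is at most K/2 -/
lemma dev_le (K N m : ℕ) (hm : 1 ≤ m) (hN : N = m*K) (h2m : 2*m ≤ N)
    (τ : (Fin K → ℕ) → ℝ) (hτ : IsMixed K N τ) (hu : UniformMarginals K N m τ)
    (σ' : (Fin K → ℕ) → ℝ) (hσ' : IsMixed K N σ') :
    expPayoff 1 K N σ' τ ≤ (K:ℝ)/2 := by
  rw [expPayoff_row]
  have hb : ∀ s ∈ pureStrats K N,
      σ' s * ∑ t ∈ pureStrats K N, τ t * payoff 1 s t ≤ σ' s * ((K:ℝ)/2) := by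
    intro s hs
    apply mul_le_mul_of_nonneg_left _ (hσ'.1 s)
    rw [pure_vs_uniform K N m hm h2m τ hτ hu s]
    have hsum : ∑ k, s k = N := by
      rw [pureStrats, Finset.Nat.mem_antidiagonalTuple] at hs; exact hs
    have := gval_ge K N m hN s hsum
    linarith
  have h2 := Finset.sum_le_sum hb
  rw [← Finset.sum_mul, hσ'.2.2, one_mul] at h2
  exact h2

/-- a uniform-marginal strategy guarantees at least K/2 -/
lemma guar_ge (K N m : ℕ) (hm : 1 ≤ m) (hN : N = m*K) (h2m : 2*m ≤ N)
    (σ : (Fin K → ℕ) → ℝ) (hσ : IsMixed K N σ) (hu : UniformMarginals K N m σ)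
    (τ : (Fin K → ℕ) → ℝ) (hτ : IsMixed K N τ) :
    (K:ℝ)/2 ≤ expPayoff 1 K N σ τ := by
  rw [expPayoff_col]
  have hb : ∀ t ∈ pureStrats K N,
      τ t * ((K:ℝ)/2) ≤ τ t * ∑ s ∈ pureStrats K N, σ s * payoff 1 s t := by
    intro t ht
    apply mul_le_mul_of_nonneg_left _ (hτ.1 t)
    rw [uniform_vs_pure K N m hm h2m σ hσ hu t]
    have hsum : ∑ k, t k = N := by
      rw [pureStrats, Finset.Nat.mem_antidiagonalTuple] at ht; exact ht
    exact gval_ge K N m hN t hsum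
  have := Finset.sum_le_sum hb
  rw [← Finset.sum_mul, hτ.2.2, one_mul] at this
  exact this

/-- a pair of uniform-marginal strategies is a Nash equilibrium -/
lemma uniformNE (K N m : ℕ) (hm : 1 ≤ m) (hN : N = m*K) (h2m : 2*m ≤ N)
    (σ τ : (Fin K → ℕ) → ℝ) (hσ : IsMixed K N σ) (hτ : IsMixed K N τ)
    (huσ : UniformMarginals K N m σ) (huτ : UniformMarginals K N m τ) :
    IsNashEq 1 K N σ τ := by
  have hval1 : expPayoff 1 K N σ τ = (K:ℝ)/2 :=
    le_antisymm (dev_le K N m hm hN h2m τ hτ huτ σ hσ) (guar_ge K N m hm hN h2m σ hσ huσ τ hτ)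
  have hval2 : expPayoff 1 K N τ σ = (K:ℝ)/2 :=
    le_antisymm (dev_le K N m hm hN h2m σ hσ huσ τ hτ) (guar_ge K N m hm hN h2m τ hτ huτ σ hσ)
  exact ⟨hσ, hτ, fun σ' hσ' => (dev_le K N m hm hN h2m τ hτ huτ σ' hσ').trans_eq hval1.symm,
    fun τ' hτ' => (dev_le K N m hm hN h2m σ hσ huσ τ' hτ').trans_eq hval2.symm⟩

/-- if a uniform-marginal strategy gets at most K/2 against τ,
then the support of τ lies in the box -/
lemma support_box (K N m : ℕ) (hm : 1 ≤ m) (hN : N = m*K) (h2m : 2*m ≤ N)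
    (σ : (Fin K → ℕ) → ℝ) (hσ : IsMixed K N σ) (hu : UniformMarginals K N m σ)
    (τ : (Fin K → ℕ) → ℝ) (hτ : IsMixed K N τ)
    (hle : expPayoff 1 K N σ τ ≤ (K:ℝ)/2) :
    ∀ t, 0 < τ t → ∀ k, t k ≤ 2*m := by
  intro t₀ ht₀ k₀
  by_contra hk₀
  have ht₀PS : t₀ ∈ pureStrats K N := by
    by_contra h
    rw [hτ.2.1 t₀ h] at ht₀
    exact lt_irrefl 0 ht₀
  have hstrict : ∑ t ∈ pureStrats K N, τ t * ((K:ℝ)/2)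
      < ∑ t ∈ pureStrats K N, τ t * ∑ s ∈ pureStrats K N, σ s * payoff 1 s t := by
    apply Finset.sum_lt_sum
    · intro t ht
      apply mul_le_mul_of_nonneg_left _ (hτ.1 t)
      rw [uniform_vs_pure K N m hm h2m σ hσ hu t]
      have hsum : ∑ k, t k = N := by
        rw [pureStrats, Finset.Nat.mem_antidiagonalTuple] at ht; exact ht
      exact gval_ge K N m hN t hsum
    · refine ⟨t₀, ht₀PS, ?_⟩
      apply mul_lt_mul_of_pos_left _ ht₀
      rw [uniform_vs_pure K N m hm h2m σ hσ hu t₀]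
      have hsum : ∑ k, t₀ k = N := by
        rw [pureStrats, Finset.Nat.mem_antidiagonalTuple] at ht₀PS; exact ht₀PS
      exact gval_gt K N m hN t₀ hsum k₀ hk₀
  rw [← Finset.sum_mul, hτ.2.2, one_mul] at hstrict
  rw [expPayoff_col] at hle
  linarith

theorem stmt14 (K m N : ℕ) (hK : 2 ≤ K) (hKeven : Even K) (hm : 1 ≤ m) (hN : N = m * K)
    (s : Fin K → ℕ) (hs : s ∈ pureStrats K N) :
    (∃ σA σB, IsNashEq 1 K N σA σB ∧ (0 < σA s ∨ 0 < σB s)) ↔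
      ∀ k, (s k : ℝ) ≤ 2 * (N : ℝ) / K := by
  obtain ⟨L, hL⟩ := hKeven
  subst hL
  subst hN
  have hL1 : 1 ≤ L := by omega
  have h2m : 2*m ≤ m*(L+L) := by nlinarith
  have hKR : ((L+L : ℕ) : ℝ) ≠ 0 := by
    have : (0:ℕ) < L + L := by omega
    exact_mod_cast this.ne'
  have hcrit : ∀ y : ℕ, ((y:ℝ) ≤ 2 * ((m*(L+L) : ℕ):ℝ) / ((L+L : ℕ):ℝ)) ↔ y ≤ 2*m := by
    intro y
    have he : 2 * ((m*(L+L) : ℕ):ℝ) / ((L+L : ℕ):ℝ) = 2*m := by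
      push_cast
      field_simp
    rw [he]
    constructor
    · intro h; exact_mod_cast h
    · intro h; exact_mod_cast h
  have hsPS : ∑ k, s k = m*(L+L) := by
    rw [pureStrats, Finset.Nat.mem_antidiagonalTuple] at hs; exact hs
  -- the all-m strategy for the forward direction
  have hmid : ∃ μ : (Fin (L+L) → ℕ) → ℝ, IsMixed (L+L) (m*(L+L)) μ ∧
      UniformMarginals (L+L) (m*(L+L)) m μ := by
    obtain ⟨μ, h1, h2, _⟩ := nuExists m L hm (fun _ => m)
      (fun _ => by show m ≤ 2*m; omega)
      (by show (∑ _k : Fin (L+L), m) = m*(L+L)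
          rw [Finset.sum_const, card_univ, Fintype.card_fin, smul_eq_mul]; ring)
    exact ⟨μ, h1, h2⟩
  constructor
  · rintro ⟨σA, σB, ⟨hmA, hmB, hbrA, hbrB⟩, hpos⟩
    obtain ⟨μ, hμmix, hμuni⟩ := hmid
    -- value chains
    have hg1 : (((L+L:ℕ)):ℝ)/2 ≤ expPayoff 1 (L+L) (m*(L+L)) μ σB :=
      guar_ge (L+L) (m*(L+L)) m hm rfl h2m μ hμmix hμuni σB hmB
    have hg2 : (((L+L:ℕ)):ℝ)/2 ≤ expPayoff 1 (L+L) (m*(L+L)) μ σA :=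
      guar_ge (L+L) (m*(L+L)) m hm rfl h2m μ hμmix hμuni σA hmA
    have hbr1 : expPayoff 1 (L+L) (m*(L+L)) μ σB ≤ expPayoff 1 (L+L) (m*(L+L)) σA σB :=
      hbrA μ hμmix
    have hbr2 : expPayoff 1 (L+L) (m*(L+L)) μ σA ≤ expPayoff 1 (L+L) (m*(L+L)) σB σA :=
      hbrB μ hμmix
    -- constant sum
    have hcs : expPayoff 1 (L+L) (m*(L+L)) σA σB + expPayoff 1 (L+L) (m*(L+L)) σB σA
        = ((L+L:ℕ):ℝ) := by
      have e1 : expPayoff 1 (L+L) (m*(L+L)) σA σB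
          = ∑ a ∈ pureStrats (L+L) (m*(L+L)), ∑ b ∈ pureStrats (L+L) (m*(L+L)),
              σA a * σB b * payoff 1 a b := by rw [expPayoff]
      have e2 : expPayoff 1 (L+L) (m*(L+L)) σB σA
          = ∑ a ∈ pureStrats (L+L) (m*(L+L)), ∑ b ∈ pureStrats (L+L) (m*(L+L)),
              σB b * σA a * payoff 1 b a := by rw [expPayoff]; exact Finset.sum_comm
      rw [e1, e2, ← Finset.sum_add_distrib]
      have hrow : ∀ a ∈ pureStrats (L+L) (m*(L+L)),
          ((∑ b ∈ pureStrats (L+L) (m*(L+L)), σA a * σB b * payoff 1 a b)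
          + (∑ b ∈ pureStrats (L+L) (m*(L+L)), σB b * σA a * payoff 1 b a))
          = σA a * ((L+L:ℕ):ℝ) := by
        intro a _
        rw [← Finset.sum_add_distrib]
        have inner : ∀ b ∈ pureStrats (L+L) (m*(L+L)),
            σA a * σB b * payoff 1 a b + σB b * σA a * payoff 1 b a
            = (σA a * ((L+L:ℕ):ℝ)) * σB b := by
          intro b _
          have h := payoff_add_payoff a b
          calc σA a * σB b * payoff 1 a b + σB b * σA a * payoff 1 b a
              = σA a * σB b * (payoff 1 a b + payoff 1 b a) := by ring
            _ = (σA a * ((L+L:ℕ):ℝ)) * σB b := by rw [h]; ring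
        rw [Finset.sum_congr rfl inner, ← Finset.mul_sum, hmB.2.2, mul_one]
      rw [Finset.sum_congr rfl hrow, ← Finset.sum_mul, hmA.2.2, one_mul]
    -- deduce both "≤ K/2" statements
    have hAB : expPayoff 1 (L+L) (m*(L+L)) σA σB ≥ ((L+L:ℕ):ℝ)/2 := le_trans hg1 hbr1
    have hBA : expPayoff 1 (L+L) (m*(L+L)) σB σA ≥ ((L+L:ℕ):ℝ)/2 := le_trans hg2 hbr2
    have hABle : expPayoff 1 (L+L) (m*(L+L)) σA σB ≤ ((L+L:ℕ):ℝ)/2 := by linarith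
    have hBAle : expPayoff 1 (L+L) (m*(L+L)) σB σA ≤ ((L+L:ℕ):ℝ)/2 := by linarith
    have hμAle : expPayoff 1 (L+L) (m*(L+L)) μ σA ≤ ((L+L:ℕ):ℝ)/2 := le_trans hbr2 hBAle
    have hμBle : expPayoff 1 (L+L) (m*(L+L)) μ σB ≤ ((L+L:ℕ):ℝ)/2 := le_trans hbr1 hABle
    intro k
    rw [hcrit (s k)]
    rcases hpos with hA | hB
    · exact support_box (L+L) (m*(L+L)) m hm rfl h2m μ hμmix hμuni σA hmA hμAle s hA k
    · exact support_box (L+L) (m*(L+L)) m hm rfl h2m μ hμmix hμuni σB hmB hμBle s hB k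
  · intro hbox
    have hbox' : ∀ k, s k ≤ 2*m := fun k => (hcrit (s k)).1 (hbox k)
    obtain ⟨ν, hνmix, hνuni, hνs⟩ := nuExists m L hm s hbox' hsPS
    exact ⟨ν, ν, uniformNE (L+L) (m*(L+L)) m hm rfl h2m ν ν hνmix hνmix hνuni hνuni,
      Or.inl hνs⟩
end

section
/- Let K ≥ 2 be even, let m ≥ 1 be an integer, set N = mK, and let α ∈ [0,1]. Suppose σ^A is a mixed strategy whose marginal distribution at every battlefield is uniform on the odd integers {1, 3, …, 2m−1}, and σ^B is a mixed strategy whose marginal distribution at every battlefield is uniform on the even integers {0, 2, …, 2m}. Then (σ^A, σ^B) is a Nash equilibrium of the Colonel Blotto game B_α(N,K), and each player's expected payoff equals K/2. -/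
open Finset

/-- `σ`'s marginal at every battlefield is uniform on the odd integers `{1,3,…,2m-1}`. -/
def OddUniformMarginals (K N m : ℕ) (σ : (Fin K → ℕ) → ℝ) : Prop :=
  ∀ k x, marginal K N σ k x = if x % 2 = 1 ∧ x < 2 * m then (1 : ℝ) / m else 0

/-- `σ`'s marginal at every battlefield is uniform on the even integers `{0,2,…,2m}`. -/
def EvenUniformMarginals (K N m : ℕ) (σ : (Fin K → ℕ) → ℝ) : Prop :=
  ∀ k x, marginal K N σ k x = if x % 2 = 0 ∧ x ≤ 2 * m then (1 : ℝ) / (m + 1) else 0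

/-! ### Auxiliary lemmas -/

/-- Per-battlefield payoff function. -/
noncomputable def fA (α : ℝ) (x y : ℕ) : ℝ :=
  (if y < x then (1 : ℝ) else 0) + α / 2 * (if x = y then 1 else 0)

lemma payoff_eq_fA (α : ℝ) {K : ℕ} (s t : Fin K → ℕ) :
    payoff α s t = ∑ k, fA α (s k) (t k) := rfl

lemma mem_pure {K N : ℕ} {s : Fin K → ℕ} (h : s ∈ pureStrats K N) (k : Fin K) :
    s k ≤ N := by
  rw [pureStrats, Finset.Nat.mem_antidiagonalTuple] at h
  calc s k ≤ ∑ i, s i := Finset.single_le_sum (fun i _ => Nat.zero_le _) (mem_univ k)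
  _ = N := h

lemma sum_pure {K N : ℕ} {s : Fin K → ℕ} (h : s ∈ pureStrats K N) :
    ∑ k, ((s k : ℝ)) = N := by
  rw [pureStrats, Finset.Nat.mem_antidiagonalTuple] at h
  rw [← Nat.cast_sum, h]

lemma marg_sum (K N : ℕ) (σ : (Fin K → ℕ) → ℝ) (k : Fin K) (F : ℕ → ℝ) :
    ∑ s ∈ pureStrats K N, σ s * F (s k)
      = ∑ x ∈ Finset.range (N+1), marginal K N σ k x * F x := by
  rw [← Finset.sum_fiberwise_of_maps_to (g := fun s => s k) (t := Finset.range (N+1))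
      (fun s hs => Finset.mem_range.mpr (Nat.lt_succ_of_le (mem_pure hs k)))]
  refine Finset.sum_congr rfl fun x _ => ?_
  rw [marginal, Finset.sum_mul]
  refine Finset.sum_congr rfl fun s hs => ?_
  rw [(Finset.mem_filter.mp hs).2]

lemma expPayoff_eq (α : ℝ) (K N : ℕ) (σ τ : (Fin K → ℕ) → ℝ) :
    expPayoff α K N σ τ = ∑ s ∈ pureStrats K N, σ s *
      ∑ k, ∑ y ∈ Finset.range (N+1), marginal K N τ k y * fA α (s k) y := by
  rw [expPayoff]
  refine Finset.sum_congr rfl fun s _ => ?_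
  have h1 : ∑ t ∈ pureStrats K N, τ t * payoff α s t
      = ∑ k, ∑ y ∈ Finset.range (N+1), marginal K N τ k y * fA α (s k) y := by
    have h2 : ∑ t ∈ pureStrats K N, τ t * payoff α s t
        = ∑ k, ∑ t ∈ pureStrats K N, τ t * fA α (s k) (t k) := by
      rw [Finset.sum_comm]
      refine Finset.sum_congr rfl fun t _ => ?_
      rw [payoff_eq_fA, Finset.mul_sum]
    rw [h2]
    exact Finset.sum_congr rfl fun k _ => marg_sum K N τ k (fA α (s k))
  rw [← h1, Finset.mul_sum]
  exact Finset.sum_congr rfl fun t _ => (mul_assoc _ _ _)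

lemma expPayoff_eq2 (α : ℝ) (K N : ℕ) (σ τ : (Fin K → ℕ) → ℝ) :
    expPayoff α K N σ τ = ∑ k, ∑ x ∈ Finset.range (N+1), marginal K N σ k x *
      ∑ y ∈ Finset.range (N+1), marginal K N τ k y * fA α x y := by
  rw [expPayoff_eq]
  have h : ∀ s ∈ pureStrats K N,
      σ s * ∑ k, (∑ y ∈ Finset.range (N+1), marginal K N τ k y * fA α (s k) y)
      = ∑ k, σ s * ∑ y ∈ Finset.range (N+1), marginal K N τ k y * fA α (s k) y :=
    fun s _ => Finset.mul_sum _ _ _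
  rw [Finset.sum_congr rfl h, Finset.sum_comm]
  exact Finset.sum_congr rfl fun k _ =>
    marg_sum K N σ k fun x => ∑ y ∈ Finset.range (N+1), marginal K N τ k y * fA α x y

lemma sum_even (c : ℝ) (F : ℕ → ℝ) : ∀ m : ℕ,
    ∑ y ∈ Finset.range (2*m+1), (if y % 2 = 0 then c * F y else 0)
      = ∑ i ∈ Finset.range (m+1), c * F (2*i)
  | 0 => by simp
  | (m+1) => by
    have h : 2*(m+1)+1 = (2*m+1)+1+1 := by ring
    rw [h, Finset.sum_range_succ, Finset.sum_range_succ, sum_even c F m]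
    rw [if_neg (show ¬((2*m+1) % 2 = 0) by omega), if_pos (show (2*m+1+1) % 2 = 0 by omega)]
    rw [show 2*m+1+1 = 2*(m+1) by ring]
    conv_rhs => rw [Finset.sum_range_succ]
    ring

lemma sum_odd (c : ℝ) (F : ℕ → ℝ) : ∀ m : ℕ,
    ∑ y ∈ Finset.range (2*m), (if y % 2 = 1 then c * F y else 0)
      = ∑ i ∈ Finset.range m, c * F (2*i+1)
  | 0 => by simp
  | (m+1) => by
    have h : 2*(m+1) = (2*m)+1+1 := by ring
    rw [h, Finset.sum_range_succ, Finset.sum_range_succ, sum_odd c F m]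
    rw [if_neg (show ¬((2*m) % 2 = 1) by omega), if_pos (show (2*m+1) % 2 = 1 by omega)]
    conv_rhs => rw [Finset.sum_range_succ]
    ring

lemma gauss1 : ∀ m : ℕ, ∑ j ∈ Finset.range m, ((j:ℝ)+1) = m*(m+1)/2
  | 0 => by simp
  | (m+1) => by rw [Finset.sum_range_succ, gauss1 m]; push_cast; ring

lemma gauss2 : ∀ m : ℕ, ∑ i ∈ Finset.range (m+1), (i:ℝ) = m*(m+1)/2
  | 0 => by simp
  | (m+1) => by rw [Finset.sum_range_succ, gauss2 m]; push_cast; ring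

lemma SB_eval (α : ℝ) (m x : ℕ) :
    ∑ i ∈ Finset.range (m+1), fA α x (2*i)
      = ((min ((x+1)/2) (m+1) : ℕ) : ℝ) + α/2 * (if x % 2 = 0 ∧ x ≤ 2*m then 1 else 0) := by
  unfold fA
  rw [Finset.sum_add_distrib]
  congr 1
  · rw [Finset.sum_boole]
    congr 1
    have h : (Finset.range (m+1)).filter (fun i => 2*i < x)
        = Finset.range (min ((x+1)/2) (m+1)) := by
      ext i; simp only [Finset.mem_filter, Finset.mem_range, lt_min_iff]; omega
    rw [h, Finset.card_range]
  · rw [← Finset.mul_sum]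
    congr 1
    by_cases h : x % 2 = 0 ∧ x ≤ 2*m
    · rw [if_pos h, Finset.sum_eq_single (x/2)]
      · rw [if_pos (by omega)]
      · intro i _ hne; rw [if_neg (by omega)]
      · intro habs; exact absurd (Finset.mem_range.mpr (by omega)) habs
    · rw [if_neg h, Finset.sum_eq_zero]
      intro i hi; simp only [Finset.mem_range] at hi; rw [if_neg (by omega)]

lemma SA_eval (α : ℝ) (m x : ℕ) :
    ∑ i ∈ Finset.range m, fA α x (2*i+1)
      = ((min (x/2) m : ℕ) : ℝ) + α/2 * (if x % 2 = 1 ∧ x < 2*m then 1 else 0) := by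
  unfold fA
  rw [Finset.sum_add_distrib]
  congr 1
  · rw [Finset.sum_boole]
    congr 1
    have h : (Finset.range m).filter (fun i => 2*i+1 < x) = Finset.range (min (x/2) m) := by
      ext i; simp only [Finset.mem_filter, Finset.mem_range, lt_min_iff]; omega
    rw [h, Finset.card_range]
  · rw [← Finset.mul_sum]
    congr 1
    by_cases h : x % 2 = 1 ∧ x < 2*m
    · rw [if_pos h, Finset.sum_eq_single (x/2)]
      · rw [if_pos (by omega)]
      · intro i _ hne; rw [if_neg (by omega)]
      · intro habs; exact absurd (Finset.mem_range.mpr (by omega)) habs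
    · rw [if_neg h, Finset.sum_eq_zero]
      intro i hi; simp only [Finset.mem_range] at hi; rw [if_neg (by omega)]

lemma SB_le {α : ℝ} (hα1 : α ≤ 1) (m x : ℕ) :
    ∑ i ∈ Finset.range (m+1), fA α x (2*i) ≤ ((x:ℝ)+1)/2 := by
  rw [SB_eval]
  by_cases h : x % 2 = 0 ∧ x ≤ 2*m
  · rw [if_pos h]
    have h1 : min ((x+1)/2) (m+1) = x/2 := by omega
    have h2 : (x:ℝ) = 2 * ((x/2 : ℕ) : ℝ) := by exact_mod_cast (show x = 2*(x/2) by omega)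
    rw [h1]; linarith
  · rw [if_neg h, mul_zero, add_zero]
    have h3 : ((min ((x+1)/2) (m+1) : ℕ) : ℝ) ≤ (((x+1)/2 : ℕ) : ℝ) :=
      Nat.cast_le.mpr (min_le_left _ _)
    have h4 : (((x+1)/2 : ℕ) : ℝ) * 2 ≤ (x:ℝ) + 1 := by
      exact_mod_cast (show ((x+1)/2) * 2 ≤ x + 1 by omega)
    linarith

lemma SA_le {α : ℝ} (hα1 : α ≤ 1) (m x : ℕ) :
    ∑ i ∈ Finset.range m, fA α x (2*i+1) ≤ (x:ℝ)/2 := by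
  rw [SA_eval]
  by_cases h : x % 2 = 1 ∧ x < 2*m
  · rw [if_pos h]
    have h1 : min (x/2) m = x/2 := by omega
    have h2 : (x:ℝ) = 2 * ((x/2 : ℕ) : ℝ) + 1 := by exact_mod_cast (show x = 2*(x/2)+1 by omega)
    rw [h1]; linarith
  · rw [if_neg h, mul_zero, add_zero]
    have h3 : ((min (x/2) m : ℕ) : ℝ) ≤ ((x/2 : ℕ) : ℝ) := Nat.cast_le.mpr (min_le_left _ _)
    have h4 : ((x/2 : ℕ) : ℝ) * 2 ≤ (x:ℝ) := by
      exact_mod_cast (show (x/2) * 2 ≤ x by omega)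
    linarith

lemma SB_odd (α : ℝ) (m j : ℕ) (hj : j < m) :
    ∑ i ∈ Finset.range (m+1), fA α (2*j+1) (2*i) = (j:ℝ)+1 := by
  rw [SB_eval, if_neg (by omega), mul_zero, add_zero,
      show min ((2*j+1+1)/2) (m+1) = j+1 by omega]
  push_cast; ring

lemma SA_even (α : ℝ) (m i : ℕ) (hi : i ≤ m) :
    ∑ j ∈ Finset.range m, fA α (2*i) (2*j+1) = (i:ℝ) := by
  rw [SA_eval, if_neg (by omega), mul_zero, add_zero,
      show min ((2*i)/2) m = i by omega]

theorem stmt15 (K m N : ℕ) (hK : 2 ≤ K) (hKeven : Even K) (hm : 1 ≤ m) (hN : N = m * K)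
    (α : ℝ) (hα : α ∈ Set.Icc (0 : ℝ) 1)
    (σA σB : (Fin K → ℕ) → ℝ) (hA : IsMixed K N σA) (hB : IsMixed K N σB)
    (hAo : OddUniformMarginals K N m σA) (hBe : EvenUniformMarginals K N m σB) :
    IsNashEq α K N σA σB ∧
    expPayoff α K N σA σB = (K : ℝ) / 2 ∧
    expPayoff α K N σB σA = (K : ℝ) / 2 := by
  obtain ⟨hα0, hα1⟩ := hα
  have hmR : (0:ℝ) < m := by exact_mod_cast hm
  have hmne : (m:ℝ) ≠ 0 := ne_of_gt hmR
  have hm1ne : (m:ℝ) + 1 ≠ 0 := by positivity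
  have h2mN : 2*m ≤ N := by
    rw [hN]
    calc 2*m = m*2 := by ring
    _ ≤ m*K := Nat.mul_le_mul_left m hK
  have hGB : ∀ (k : Fin K) (x : ℕ),
      (∑ y ∈ Finset.range (N+1), marginal K N σB k y * fA α x y)
        = (1/((m:ℝ)+1)) * ∑ i ∈ Finset.range (m+1), fA α x (2*i) := by
    intro k x
    have hsub : Finset.range (2*m+1) ⊆ Finset.range (N+1) := Finset.range_subset_range.mpr (by omega)
    rw [← Finset.sum_subset hsub (fun y hy hy2 => by
      simp only [Finset.mem_range] at hy hy2
      rw [hBe k y, if_neg (by omega), zero_mul])]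
    have hcong : ∀ y ∈ Finset.range (2*m+1), marginal K N σB k y * fA α x y
        = (if y % 2 = 0 then ((1:ℝ)/((m:ℝ)+1)) * fA α x y else 0) := by
      intro y hy
      simp only [Finset.mem_range] at hy
      rw [hBe k y]
      by_cases h : y % 2 = 0
      · rw [if_pos ⟨h, by omega⟩, if_pos h]
      · rw [if_neg (fun hc => h hc.1), if_neg h, zero_mul]
    rw [Finset.sum_congr rfl hcong, sum_even, ← Finset.mul_sum]
  have hGA : ∀ (k : Fin K) (x : ℕ),
      (∑ y ∈ Finset.range (N+1), marginal K N σA k y * fA α x y)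
        = (1/(m:ℝ)) * ∑ i ∈ Finset.range m, fA α x (2*i+1) := by
    intro k x
    have hsub : Finset.range (2*m) ⊆ Finset.range (N+1) := Finset.range_subset_range.mpr (by omega)
    rw [← Finset.sum_subset hsub (fun y hy hy2 => by
      simp only [Finset.mem_range] at hy hy2
      rw [hAo k y, if_neg (by omega), zero_mul])]
    have hcong : ∀ y ∈ Finset.range (2*m), marginal K N σA k y * fA α x y
        = (if y % 2 = 1 then ((1:ℝ)/(m:ℝ)) * fA α x y else 0) := by
      intro y hy
      simp only [Finset.mem_range] at hy
      rw [hAo k y]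
      by_cases h : y % 2 = 1
      · rw [if_pos ⟨h, hy⟩, if_pos h]
      · rw [if_neg (fun hc => h hc.1), if_neg h, zero_mul]
    rw [Finset.sum_congr rfl hcong, sum_odd, ← Finset.mul_sum]
  have hVB : expPayoff α K N σA σB = (K:ℝ)/2 := by
    rw [expPayoff_eq2]
    have hk : ∀ k : Fin K, (∑ x ∈ Finset.range (N+1), marginal K N σA k x *
        ∑ y ∈ Finset.range (N+1), marginal K N σB k y * fA α x y) = 1/2 := by
      intro k
      have hc : ∀ x ∈ Finset.range (N+1), marginal K N σA k x *
          (∑ y ∈ Finset.range (N+1), marginal K N σB k y * fA α x y)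
          = marginal K N σA k x * ((1/((m:ℝ)+1)) * ∑ i ∈ Finset.range (m+1), fA α x (2*i)) :=
        fun x _ => by rw [hGB k x]
      rw [Finset.sum_congr rfl hc]
      have hsub : Finset.range (2*m) ⊆ Finset.range (N+1) := Finset.range_subset_range.mpr (by omega)
      rw [← Finset.sum_subset hsub (fun x hx hx2 => by
        simp only [Finset.mem_range] at hx hx2
        rw [hAo k x, if_neg (by omega), zero_mul])]
      have hcong2 : ∀ x ∈ Finset.range (2*m),
          marginal K N σA k x * ((1/((m:ℝ)+1)) * ∑ i ∈ Finset.range (m+1), fA α x (2*i))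
          = if x % 2 = 1 then ((1:ℝ)/(m:ℝ)) *
              ((1/((m:ℝ)+1)) * ∑ i ∈ Finset.range (m+1), fA α x (2*i)) else 0 := by
        intro x hx
        simp only [Finset.mem_range] at hx
        rw [hAo k x]
        by_cases h : x % 2 = 1
        · rw [if_pos ⟨h, hx⟩, if_pos h]
        · rw [if_neg (fun hc => h hc.1), if_neg h, zero_mul]
      rw [Finset.sum_congr rfl hcong2, sum_odd]
      have hcong3 : ∀ j ∈ Finset.range m,
          ((1:ℝ)/(m:ℝ)) * ((1/((m:ℝ)+1)) * ∑ i ∈ Finset.range (m+1), fA α (2*j+1) (2*i))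
          = ((1:ℝ)/((m:ℝ)*((m:ℝ)+1))) * ((j:ℝ)+1) := by
        intro j hj
        rw [SB_odd α m j (Finset.mem_range.mp hj)]
        field_simp
      rw [Finset.sum_congr rfl hcong3, ← Finset.mul_sum, gauss1]
      field_simp
    rw [Finset.sum_congr rfl (fun k _ => hk k), Finset.sum_const, Finset.card_univ,
        Fintype.card_fin, nsmul_eq_mul]
    ring
  have hVA : expPayoff α K N σB σA = (K:ℝ)/2 := by
    rw [expPayoff_eq2]
    have hk : ∀ k : Fin K, (∑ x ∈ Finset.range (N+1), marginal K N σB k x *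
        ∑ y ∈ Finset.range (N+1), marginal K N σA k y * fA α x y) = 1/2 := by
      intro k
      have hc : ∀ x ∈ Finset.range (N+1), marginal K N σB k x *
          (∑ y ∈ Finset.range (N+1), marginal K N σA k y * fA α x y)
          = marginal K N σB k x * ((1/(m:ℝ)) * ∑ i ∈ Finset.range m, fA α x (2*i+1)) :=
        fun x _ => by rw [hGA k x]
      rw [Finset.sum_congr rfl hc]
      have hsub : Finset.range (2*m+1) ⊆ Finset.range (N+1) := Finset.range_subset_range.mpr (by omega)
      rw [← Finset.sum_subset hsub (fun x hx hx2 => by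
        simp only [Finset.mem_range] at hx hx2
        rw [hBe k x, if_neg (by omega), zero_mul])]
      have hcong2 : ∀ x ∈ Finset.range (2*m+1),
          marginal K N σB k x * ((1/(m:ℝ)) * ∑ i ∈ Finset.range m, fA α x (2*i+1))
          = if x % 2 = 0 then ((1:ℝ)/((m:ℝ)+1)) *
              ((1/(m:ℝ)) * ∑ i ∈ Finset.range m, fA α x (2*i+1)) else 0 := by
        intro x hx
        simp only [Finset.mem_range] at hx
        rw [hBe k x]
        by_cases h : x % 2 = 0
        · rw [if_pos ⟨h, by omega⟩, if_pos h]
        · rw [if_neg (fun hc => h hc.1), if_neg h, zero_mul]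
      rw [Finset.sum_congr rfl hcong2, sum_even]
      have hcong3 : ∀ i ∈ Finset.range (m+1),
          ((1:ℝ)/((m:ℝ)+1)) * ((1/(m:ℝ)) * ∑ j ∈ Finset.range m, fA α (2*i) (2*j+1))
          = ((1:ℝ)/((m:ℝ)*((m:ℝ)+1))) * (i:ℝ) := by
        intro i hi
        rw [SA_even α m i (Nat.lt_succ_iff.mp (Finset.mem_range.mp hi))]
        field_simp
      rw [Finset.sum_congr rfl hcong3, ← Finset.mul_sum, gauss2]
      field_simp
    rw [Finset.sum_congr rfl (fun k _ => hk k), Finset.sum_const, Finset.card_univ,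
        Fintype.card_fin, nsmul_eq_mul]
    ring
  have hDevB : ∀ σ', IsMixed K N σ' → expPayoff α K N σ' σB ≤ (K:ℝ)/2 := by
    intro σ' hσ'
    rw [expPayoff_eq α K N σ' σB]
    have hin : ∀ s ∈ pureStrats K N,
        σ' s * (∑ k, ∑ y ∈ Finset.range (N+1), marginal K N σB k y * fA α (s k) y)
          ≤ σ' s * ((K:ℝ)/2) := by
      intro s hs
      refine mul_le_mul_of_nonneg_left ?_ (hσ'.1 s)
      have hb : ∀ k : Fin K, (∑ y ∈ Finset.range (N+1), marginal K N σB k y * fA α (s k) y)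
          ≤ (1/((m:ℝ)+1)) * (((s k:ℝ)+1)/2) := by
        intro k
        rw [hGB k (s k)]
        exact mul_le_mul_of_nonneg_left (SB_le hα1 m (s k)) (by positivity)
      calc (∑ k, ∑ y ∈ Finset.range (N+1), marginal K N σB k y * fA α (s k) y)
          ≤ ∑ k, (1/((m:ℝ)+1)) * (((s k:ℝ)+1)/2) := Finset.sum_le_sum fun k _ => hb k
        _ = (1/((m:ℝ)+1)) * (((N:ℝ) + K)/2) := by
            rw [← Finset.mul_sum]
            congr 1
            rw [← Finset.sum_div, Finset.sum_add_distrib, sum_pure hs, Finset.sum_const,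
                Finset.card_univ, Fintype.card_fin, nsmul_eq_mul, mul_one]
        _ = (K:ℝ)/2 := by
            rw [hN]; push_cast; field_simp
    refine le_trans (Finset.sum_le_sum hin) ?_
    rw [← Finset.sum_mul, hσ'.2.2, one_mul]
  have hDevA : ∀ τ', IsMixed K N τ' → expPayoff α K N τ' σA ≤ (K:ℝ)/2 := by
    intro τ' hτ'
    rw [expPayoff_eq α K N τ' σA]
    have hin : ∀ s ∈ pureStrats K N,
        τ' s * (∑ k, ∑ y ∈ Finset.range (N+1), marginal K N σA k y * fA α (s k) y)
          ≤ τ' s * ((K:ℝ)/2) := by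
      intro s hs
      refine mul_le_mul_of_nonneg_left ?_ (hτ'.1 s)
      have hb : ∀ k : Fin K, (∑ y ∈ Finset.range (N+1), marginal K N σA k y * fA α (s k) y)
          ≤ (1/(m:ℝ)) * ((s k:ℝ)/2) := by
        intro k
        rw [hGA k (s k)]
        exact mul_le_mul_of_nonneg_left (SA_le hα1 m (s k)) (by positivity)
      calc (∑ k, ∑ y ∈ Finset.range (N+1), marginal K N σA k y * fA α (s k) y)
          ≤ ∑ k, (1/(m:ℝ)) * ((s k:ℝ)/2) := Finset.sum_le_sum fun k _ => hb k
        _ = (1/(m:ℝ)) * ((N:ℝ)/2) := by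
            rw [← Finset.mul_sum]
            congr 1
            rw [← Finset.sum_div, sum_pure hs]
        _ = (K:ℝ)/2 := by
            rw [hN]; push_cast; field_simp
    refine le_trans (Finset.sum_le_sum hin) ?_
    rw [← Finset.sum_mul, hτ'.2.2, one_mul]
  refine ⟨⟨hA, hB, ?_, ?_⟩, hVB, hVA⟩
  · intro σ' h; rw [hVB]; exact hDevB σ' h
  · intro τ' h; rw [hVA]; exact hDevA τ' h
end
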